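/- In the polynomial ring ℝ[x₁,x₂,x₃,x₄], the polynomials P¹ = x₁² − x₂² + x₃² − x₄² and P² = 2(x₁x₂ + x₃x₄) form a regular sequence: P¹ is not a zero divisor in ℝ[x₁,x₂,x₃,x₄], P² is not a zero divisor in the quotient ring ℝ[x₁,x₂,x₃,x₄]/⟨P¹⟩, and symmetrically P¹ is not a zero divisor in ℝ[x₁,x₂,x₃,x₄]/⟨P²⟩. Equivalently: for any g ∈ ℝ[x₁,x₂,x₃,x₄], if P²·g lies in the ideal generated by P¹ then g lies in the ideal generated by P¹, and if P¹·g lies in the ideal generated by P² then g lies in the ideal generated by P². -/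

import Mathlib

open MvPolynomial

noncomputable abbrev LefschetzAux.R3 := MvPolynomial (Fin 3) ℝ
noncomputable abbrev LefschetzAux.KK := FractionRing LefschetzAux.R3

namespace LefschetzAux

lemma not_sq (r : R3) : r ^ 2 ≠ (X 0 ^ 2 - X 1 ^ 2 + X 2 ^ 2 : R3) := by
  intro h
  have := congrArg (eval ![0, 1, 0]) h
  simp at this
  nlinarith [sq_nonneg (eval ![0, 1, 0] r), this]

lemma prime_target1 :
    Prime (Polynomial.X ^ 2 - Polynomial.C (X 0 ^ 2 - X 1 ^ 2 + X 2 ^ 2 : R3)) := by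
  set a : R3 := X 0 ^ 2 - X 1 ^ 2 + X 2 ^ 2 with ha
  have hmonic : (Polynomial.X ^ 2 - Polynomial.C a).Monic := by
    apply Polynomial.monic_X_pow_sub_C _ (by norm_num)
  rw [← UniqueFactorizationMonoid.irreducible_iff_prime]
  rw [hmonic.irreducible_iff_irreducible_map_fraction_map (K := KK)]
  rw [Polynomial.map_sub, Polynomial.map_pow, Polynomial.map_X, Polynomial.map_C]
  apply X_pow_sub_C_irreducible_of_prime Nat.prime_two
  intro b hb
  have hint : IsIntegral R3 b := by
    refine ⟨Polynomial.X ^ 2 - Polynomial.C a, hmonic, ?_⟩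
    simp [Polynomial.eval₂_sub, hb]
  obtain ⟨r, hr⟩ := IsIntegrallyClosed.isIntegral_iff.mp hint
  apply not_sq r
  apply IsFractionRing.injective R3 KK
  rw [map_pow, hr, hb]

lemma prime_X0 : Prime (X 0 : R3) := by
  rw [← MulEquiv.prime_iff (finSuccEquiv ℝ 2).toMulEquiv]
  show Prime ((finSuccEquiv ℝ 2) (X 0))
  rw [finSuccEquiv_X_zero]
  exact Polynomial.prime_X

lemma X0_not_dvd (j : Fin 3) (hj : j ≠ 0) : ¬ (X 0 : R3) ∣ X j := by
  rintro ⟨q, hq⟩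
  have := congrArg (eval fun i => if i = 0 then (0:ℝ) else 1) hq
  simp [hj] at this

lemma prime_target2 :
    Prime (Polynomial.C (2 * X 0 : R3) * Polynomial.X + Polynomial.C (2 * (X 1 * X 2) : R3)) := by
  set f : Polynomial R3 :=
    Polynomial.C (2 * X 0 : R3) * Polynomial.X + Polynomial.C (2 * (X 1 * X 2) : R3) with hf
  have h2 : IsUnit (2 : R3) := by
    have := IsUnit.map (C : ℝ →+* R3) (isUnit_iff_ne_zero.mpr (two_ne_zero (α := ℝ)))
    rwa [map_ofNat] at this
  have hprim : f.IsPrimitive := by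
    intro r hr
    have hc1 : r ∣ (2 * X 0 : R3) := by
      have := (Polynomial.C_dvd_iff_dvd_coeff r f).mp hr 1
      simpa [hf] using this
    have hc0 : r ∣ (2 * (X 1 * X 2) : R3) := by
      have := (Polynomial.C_dvd_iff_dvd_coeff r f).mp hr 0
      simpa [hf] using this
    have hx0 : r ∣ (X 0 : R3) := h2.dvd_mul_left.mp hc1
    have hx12 : r ∣ (X 1 * X 2 : R3) := h2.dvd_mul_left.mp hc0
    obtain ⟨s, hs⟩ := hx0
    rcases prime_X0.irreducible.isUnit_or_isUnit hs with h | h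
    · exact h
    · exfalso
      obtain ⟨b, hb, -⟩ := isUnit_iff_exists.mp h
      have hXr : (X 0 : R3) ∣ r := ⟨b, by rw [hs, mul_assoc, hb, mul_one]⟩
      rcases prime_X0.2.2 _ _ (hXr.trans hx12) with h' | h'
      · exact X0_not_dvd 1 (by decide) h'
      · exact X0_not_dvd 2 (by decide) h'
  rw [← UniqueFactorizationMonoid.irreducible_iff_prime]
  apply hprim.irreducible_of_irreducible_map_of_injective (IsFractionRing.injective R3 KK)
  rw [Polynomial.map_add, Polynomial.map_mul, Polynomial.map_C, Polynomial.map_X, Polynomial.map_C]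
  apply Polynomial.irreducible_of_degree_eq_one
  apply Polynomial.degree_linear
  simp only [ne_eq, map_eq_zero_iff _ (IsFractionRing.injective R3 KK)]
  intro h
  have := congrArg (eval fun _ => (1:ℝ)) h
  simp at this

lemma primeP1 : Prime (X 0 ^ 2 - X 1 ^ 2 + X 2 ^ 2 - X 3 ^ 2 : MvPolynomial (Fin 4) ℝ) := by
  rw [← MulEquiv.prime_iff (finSuccEquiv ℝ 3).toMulEquiv]
  show Prime ((finSuccEquiv ℝ 3) (X 0 ^ 2 - X 1 ^ 2 + X 2 ^ 2 - X 3 ^ 2))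
  have heq : (finSuccEquiv ℝ 3) (X 0 ^ 2 - X 1 ^ 2 + X 2 ^ 2 - X 3 ^ 2 : MvPolynomial (Fin 4) ℝ)
      = Polynomial.X ^ 2 - Polynomial.C (X 0 ^ 2 - X 1 ^ 2 + X 2 ^ 2 : R3) := by
    have h1 : (1 : Fin 4) = Fin.succ 0 := rfl
    have h2 : (2 : Fin 4) = Fin.succ 1 := rfl
    have h3 : (3 : Fin 4) = Fin.succ 2 := rfl
    rw [h1, h2, h3]
    simp only [map_sub, map_add, map_pow, finSuccEquiv_X_zero, finSuccEquiv_X_succ]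
    ring
  rw [heq]
  exact prime_target1

lemma primeP2 : Prime (2 * (X 0 * X 1 + X 2 * X 3) : MvPolynomial (Fin 4) ℝ) := by
  rw [← MulEquiv.prime_iff (finSuccEquiv ℝ 3).toMulEquiv]
  show Prime ((finSuccEquiv ℝ 3) (2 * (X 0 * X 1 + X 2 * X 3)))
  have heq : (finSuccEquiv ℝ 3) (2 * (X 0 * X 1 + X 2 * X 3) : MvPolynomial (Fin 4) ℝ)
      = Polynomial.C (2 * X 0 : R3) * Polynomial.X + Polynomial.C (2 * (X 1 * X 2) : R3) := by
    have h1 : (1 : Fin 4) = Fin.succ 0 := rfl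
    have h2 : (2 : Fin 4) = Fin.succ 1 := rfl
    have h3 : (3 : Fin 4) = Fin.succ 2 := rfl
    rw [h1, h2, h3]
    simp only [map_sub, map_add, map_pow, map_mul, map_ofNat, finSuccEquiv_X_zero,
      finSuccEquiv_X_succ]
    ring
  rw [heq]
  exact prime_target2

lemma not_dvd_P1P2 :
    ¬ (X 0 ^ 2 - X 1 ^ 2 + X 2 ^ 2 - X 3 ^ 2 : MvPolynomial (Fin 4) ℝ) ∣
      (2 * (X 0 * X 1 + X 2 * X 3)) := by
  rintro ⟨q, hq⟩
  have := congrArg (eval ![1, 1, 0, 0]) hq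
  simp at this

lemma not_dvd_P2P1 :
    ¬ (2 * (X 0 * X 1 + X 2 * X 3) : MvPolynomial (Fin 4) ℝ) ∣
      (X 0 ^ 2 - X 1 ^ 2 + X 2 ^ 2 - X 3 ^ 2) := by
  rintro ⟨q, hq⟩
  have := congrArg (eval ![1, 0, 0, 0]) hq
  simp at this

end LefschetzAux

/-- `P¹ = x₁² − x₂² + x₃² − x₄²` and `P² = 2(x₁x₂ + x₃x₄)` form a regular
sequence in ℝ[x₁,x₂,x₃,x₄] (in either order): `P¹` is not a zero divisor, `P²`
is not a zero divisor modulo `P¹`, and `P¹` is not a zero divisor modulo `P²`. -/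
theorem lefschetz_casimirs_regular_sequence :
    (∀ g : MvPolynomial (Fin 4) ℝ,
      (X 0 ^ 2 - X 1 ^ 2 + X 2 ^ 2 - X 3 ^ 2) * g = 0 → g = 0) ∧
    (∀ g : MvPolynomial (Fin 4) ℝ,
      (2 * (X 0 * X 1 + X 2 * X 3)) * g = 0 → g = 0) ∧
    (∀ g : MvPolynomial (Fin 4) ℝ,
      (2 * (X 0 * X 1 + X 2 * X 3)) * g ∈
          Ideal.span ({X 0 ^ 2 - X 1 ^ 2 + X 2 ^ 2 - X 3 ^ 2} :
            Set (MvPolynomial (Fin 4) ℝ)) →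
        g ∈ Ideal.span ({X 0 ^ 2 - X 1 ^ 2 + X 2 ^ 2 - X 3 ^ 2} :
            Set (MvPolynomial (Fin 4) ℝ))) ∧
    (∀ g : MvPolynomial (Fin 4) ℝ,
      (X 0 ^ 2 - X 1 ^ 2 + X 2 ^ 2 - X 3 ^ 2) * g ∈
          Ideal.span ({2 * (X 0 * X 1 + X 2 * X 3)} :
            Set (MvPolynomial (Fin 4) ℝ)) →
        g ∈ Ideal.span ({2 * (X 0 * X 1 + X 2 * X 3)} :
            Set (MvPolynomial (Fin 4) ℝ))) := by
  refine ⟨fun g hg => ?_, fun g hg => ?_, fun g hg => ?_, fun g hg => ?_⟩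
  · rcases mul_eq_zero.mp hg with h | h
    · exact absurd h LefschetzAux.primeP1.ne_zero
    · exact h
  · rcases mul_eq_zero.mp hg with h | h
    · exact absurd h LefschetzAux.primeP2.ne_zero
    · exact h
  · rw [Ideal.mem_span_singleton] at hg ⊢
    rcases LefschetzAux.primeP1.2.2 _ _ hg with h | h
    · exact absurd h LefschetzAux.not_dvd_P1P2
    · exact h
  · rw [Ideal.mem_span_singleton] at hg ⊢
    rcases LefschetzAux.primeP2.2.2 _ _ hg with h | h
    · exact absurd h LefschetzAux.not_dvd_P2P1
    · exact h
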